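/- Let A ∈ ℂ^{N×N} be Hermitian positive definite with extremal eigenvalues λ_min ≤ λ_max, let b ∈ ℂ^N, and let f(z) = ∫₀^∞ (z+t)^{-1} dμ(t) be a Stieltjes function (μ a nonnegative measure). Let V_m span the Krylov space K_m(A,b), let U span an augmentation space, and let f_m be the augmented FOM approximant built from the orthonormalized basis of span([V_m, U]) via f_m = 𝐕 f(𝐕* A 𝐕) 𝐕* b. Then ‖f(A)b − f_m‖_A ≤ ∫₀^∞ sqrt(λ_max/(λ_max+t)) · ‖e_m(t)‖_{A+tI} dμ(t), where e_m(t) is the error of the standard (non-augmented) FOM approximant for (A+tI)x = b from K_m(A,b). -/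

import Mathlib

open Matrix MeasureTheory ComplexOrder

lemma re_qf_nonneg {n : ℕ} {B : Matrix (Fin n) (Fin n) ℂ} (hB : B.PosSemidef) (v : Fin n → ℂ) :
    0 ≤ (star v ⬝ᵥ B.mulVec v).re :=
  (Complex.le_def.mp (hB.dotProduct_mulVec_nonneg v)).1

lemma herm_qf_symm {n : ℕ} {B : Matrix (Fin n) (Fin n) ℂ} (hB : B.IsHermitian)
    (x y : Fin n → ℂ) : star x ⬝ᵥ B.mulVec y = star (star y ⬝ᵥ B.mulVec x) := by
  rw [star_dotProduct]
  congr 1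
  rw [star_mulVec, hB.eq, ← dotProduct_mulVec]

-- pull Vb across dot product
lemma starVb_dot {n r : ℕ} (Vb : Matrix (Fin n) (Fin r) ℂ) (c : Fin r → ℂ) (w : Fin n → ℂ) :
    star (Vb.mulVec c) ⬝ᵥ w = star c ⬝ᵥ Vbᴴ.mulVec w := by
  rw [star_mulVec, ← dotProduct_mulVec]

lemma qf_le_lmax {N : ℕ} (A : Matrix (Fin N) (Fin N) ℂ) (hA : A.IsHermitian)
    (lmax : ℝ) (hub : ∀ i, hA.eigenvalues i ≤ lmax) (v : Fin N → ℂ) :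
    (star v ⬝ᵥ A.mulVec v).re ≤ lmax * (star v ⬝ᵥ v).re := by
  set Umat : Matrix (Fin N) (Fin N) ℂ := (hA.eigenvectorUnitary : Matrix (Fin N) (Fin N) ℂ) with hU
  set w : Fin N → ℂ := (star Umat).mulVec v with hw
  have hsw : star w = vecMul (star v) Umat := by
    rw [hw, star_mulVec]
    rw [← star_eq_conjTranspose, star_star]
  have h1 : star v ⬝ᵥ A.mulVec v = ∑ i, (hA.eigenvalues i : ℂ) * (star (w i) * w i) := by
    conv_lhs => rw [hA.spectral_theorem, Unitary.conjStarAlgAut_apply]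
    rw [← mulVec_mulVec, ← mulVec_mulVec, dotProduct_mulVec, ← hsw, ← hw]
    simp only [dotProduct, mulVec_diagonal, Pi.star_apply]
    exact Finset.sum_congr rfl fun i _ => by simp [Function.comp]; ring
  have h2 : star v ⬝ᵥ v = ∑ i, star (w i) * w i := by
    have : star w ⬝ᵥ w = star v ⬝ᵥ v := by
      rw [hsw, hw, ← dotProduct_mulVec, mulVec_mulVec,
        (Matrix.mem_unitaryGroup_iff).mp hA.eigenvectorUnitary.2, one_mulVec]
    rw [← this]
    simp [dotProduct]
  have hterm : ∀ i, (star (w i) * w i).re = Complex.normSq (w i) := by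
    intro i
    simp [Complex.star_def, Complex.normSq_apply]
  rw [h1, h2]
  rw [Complex.re_sum, Complex.re_sum]
  have : ∀ i : Fin N, ((hA.eigenvalues i : ℂ) * (star (w i) * w i)).re
      = hA.eigenvalues i * Complex.normSq (w i) := by
    intro i
    rw [Complex.re_ofReal_mul, hterm]
  simp only [this, hterm, Finset.mul_sum]
  exact Finset.sum_le_sum fun i _ => mul_le_mul_of_nonneg_right (hub i) (Complex.normSq_nonneg _)

lemma galerkin_opt {n r : ℕ} (B : Matrix (Fin n) (Fin n) ℂ) (hB : B.PosDef)
    (Vb : Matrix (Fin n) (Fin r) ℂ) (hVo : Vbᴴ * Vb = 1)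
    (Bs : Matrix (Fin r) (Fin r) ℂ) (hBs : Bs = Vbᴴ * B * Vb)
    (b : Fin n → ℂ) (c : Fin r → ℂ) :
    (star (B⁻¹.mulVec b - Vb.mulVec (Bs⁻¹.mulVec (Vbᴴ.mulVec b))) ⬝ᵥ
      B.mulVec (B⁻¹.mulVec b - Vb.mulVec (Bs⁻¹.mulVec (Vbᴴ.mulVec b)))).re ≤
    (star (B⁻¹.mulVec b - Vb.mulVec c) ⬝ᵥ B.mulVec (B⁻¹.mulVec b - Vb.mulVec c)).re := by
  subst hBs
  have hVinj : ∀ x : Fin r → ℂ, Vb.mulVec x = 0 → x = 0 := by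
    intro x hx
    have : (Vbᴴ * Vb).mulVec x = 0 := by
      rw [← mulVec_mulVec, hx, mulVec_zero]
    rwa [hVo, one_mulVec] at this
  have hBsPD : (Vbᴴ * B * Vb).PosDef := by
    refine PosDef.of_dotProduct_mulVec_pos (isHermitian_conjTranspose_mul_mul _ hB.1) fun x hx => ?_
    have hvx : Vb.mulVec x ≠ 0 := fun h => hx (hVinj x h)
    simpa only [star_mulVec, dotProduct_mulVec, vecMul_vecMul] using hB.dotProduct_mulVec_pos hvx
  set y := (Vbᴴ * B * Vb)⁻¹.mulVec (Vbᴴ.mulVec b) with hy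
  set e := B⁻¹.mulVec b - Vb.mulVec y with he
  have horth : Vbᴴ.mulVec (B.mulVec e) = 0 := by
    have h1 : B.mulVec (B⁻¹.mulVec b) = b := by
      rw [mulVec_mulVec, Matrix.mul_nonsing_inv _ ((Matrix.isUnit_iff_isUnit_det B).mp hB.isUnit),
        one_mulVec]
    have h2 : (Vbᴴ * B * Vb).mulVec y = Vbᴴ.mulVec b := by
      rw [hy, mulVec_mulVec,
        Matrix.mul_nonsing_inv _ ((Matrix.isUnit_iff_isUnit_det _).mp hBsPD.isUnit), one_mulVec]
    rw [he, mulVec_sub, h1, mulVec_sub, mulVec_mulVec, mulVec_mulVec, h2]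
    simp
  have key : ∀ c' : Fin r → ℂ, star (Vb.mulVec c') ⬝ᵥ B.mulVec e = 0 := by
    intro c'
    rw [starVb_dot, horth, dotProduct_zero]
  have hem : B⁻¹.mulVec b - Vb.mulVec c = e + Vb.mulVec (y - c) := by
    rw [mulVec_sub, he]
    abel
  set d := Vb.mulVec (y - c) with hd
  have hc1 : star d ⬝ᵥ B.mulVec e = 0 := key _
  have hc2 : star e ⬝ᵥ B.mulVec d = 0 := by
    rw [herm_qf_symm hB.1, hc1, star_zero]
  have expand : star (e + d) ⬝ᵥ B.mulVec (e + d)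
      = star e ⬝ᵥ B.mulVec e + star d ⬝ᵥ B.mulVec d
        + (star d ⬝ᵥ B.mulVec e + star e ⬝ᵥ B.mulVec d) := by
    simp only [mulVec_add, star_add, add_dotProduct, dotProduct_add]
    ring
  rw [hem, expand, hc1, hc2]
  simp only [add_zero, Complex.add_re]
  linarith [re_qf_nonneg hB.posSemidef d]

lemma smul_one_psd {n : ℕ} {t : ℝ} (ht : 0 ≤ t) :
    ((t : ℂ) • (1 : Matrix (Fin n) (Fin n) ℂ)).PosSemidef := by
  refine PosSemidef.of_dotProduct_mulVec_nonneg ?_ ?_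
  · unfold Matrix.IsHermitian
    rw [conjTranspose_smul, conjTranspose_one]
    congr 1
    simp [Complex.star_def, Complex.conj_ofReal]
  · intro x
    rw [smul_mulVec, one_mulVec, dotProduct_smul]
    exact mul_nonneg (by exact_mod_cast Complex.zero_le_real.mpr ht)
      (dotProduct_star_self_nonneg x)

-- sqrt of A-quadratic form as Euclidean norm of S * v, where S*S = A
lemma sqrt_qf_eq_norm {N : ℕ} {A S : Matrix (Fin N) (Fin N) ℂ}
    (hSH : S.IsHermitian) (hS : S * S = A) (v : Fin N → ℂ) :
    Real.sqrt ((star v ⬝ᵥ A.mulVec v).re)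
      = ‖(WithLp.equiv 2 (Fin N → ℂ)).symm (S.mulVec v)‖ := by
  subst hS
  have h1 : star v ⬝ᵥ (S * S).mulVec v = star (S.mulVec v) ⬝ᵥ (S.mulVec v) := by
    rw [← mulVec_mulVec, dotProduct_mulVec]
    congr 1
    rw [star_mulVec, hSH.eq]
  rw [h1, EuclideanSpace.norm_eq]
  congr 1
  simp only [dotProduct, Pi.star_apply, Complex.re_sum]
  refine Finset.sum_congr rfl fun i _ => ?_
  have : (star (S.mulVec v i) * S.mulVec v i).re = Complex.normSq (S.mulVec v i) := by
    simp [Complex.star_def, Complex.normSq_apply]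
  rw [this, ← Complex.sq_norm]
  rfl

lemma re_star_dot_nonneg {n : ℕ} (v : Fin n → ℂ) : 0 ≤ (star v ⬝ᵥ v).re :=
  (Complex.le_def.mp (dotProduct_star_self_nonneg v)).1

lemma pointwise_bound {N r : ℕ} (A : Matrix (Fin N) (Fin N) ℂ) (hA : A.IsHermitian)
    (hApd : A.PosDef) (lmax : ℝ) (hl0 : 0 < lmax) (hub : ∀ i, hA.eigenvalues i ≤ lmax)
    (Vb : Matrix (Fin N) (Fin r) ℂ) (hVo : Vbᴴ * Vb = 1) (b : Fin N → ℂ)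
    (t : ℝ) (ht : 0 ≤ t) (s : Fin N → ℂ) (c : Fin r → ℂ) (hs : s = Vb.mulVec c) :
    Real.sqrt ((star ((A + (t : ℂ) • (1 : Matrix (Fin N) (Fin N) ℂ))⁻¹.mulVec b -
        Vb.mulVec ((Vbᴴ * A * Vb + (t : ℂ) • (1 : Matrix (Fin r) (Fin r) ℂ))⁻¹.mulVec
          (Vbᴴ.mulVec b))) ⬝ᵥ
      A.mulVec ((A + (t : ℂ) • (1 : Matrix (Fin N) (Fin N) ℂ))⁻¹.mulVec b -
        Vb.mulVec ((Vbᴴ * A * Vb + (t : ℂ) • (1 : Matrix (Fin r) (Fin r) ℂ))⁻¹.mulVec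
          (Vbᴴ.mulVec b)))).re)
    ≤ Real.sqrt (lmax / (lmax + t)) *
      Real.sqrt ((star ((A + (t : ℂ) • (1 : Matrix (Fin N) (Fin N) ℂ))⁻¹.mulVec b - s) ⬝ᵥ
        (A + (t : ℂ) • (1 : Matrix (Fin N) (Fin N) ℂ)).mulVec
          ((A + (t : ℂ) • (1 : Matrix (Fin N) (Fin N) ℂ))⁻¹.mulVec b - s)).re) := by
  set B : Matrix (Fin N) (Fin N) ℂ := A + (t : ℂ) • 1 with hB
  have hBpd : B.PosDef := hApd.add_posSemidef (smul_one_psd ht)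
  have hBsmall : Vbᴴ * A * Vb + (t : ℂ) • (1 : Matrix (Fin r) (Fin r) ℂ) = Vbᴴ * B * Vb := by
    rw [hB, Matrix.mul_add, Matrix.add_mul]
    congr 1
    rw [Matrix.mul_smul, Matrix.smul_mul, Matrix.mul_one, hVo]
  set e : Fin N → ℂ := B⁻¹.mulVec b -
    Vb.mulVec ((Vbᴴ * B * Vb)⁻¹.mulVec (Vbᴴ.mulVec b)) with he
  set em : Fin N → ℂ := B⁻¹.mulVec b - Vb.mulVec c with hem
  rw [hBsmall, hs, ← he, ← hem]
  have hlt : 0 < lmax + t := by linarith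
  have hgal : (star e ⬝ᵥ B.mulVec e).re ≤ (star em ⬝ᵥ B.mulVec em).re :=
    galerkin_opt B hBpd Vb hVo _ rfl b c
  have hqB : (star e ⬝ᵥ B.mulVec e).re
      = (star e ⬝ᵥ A.mulVec e).re + t * (star e ⬝ᵥ e).re := by
    rw [hB, add_mulVec, dotProduct_add, Complex.add_re, smul_mulVec, one_mulVec,
      dotProduct_smul, smul_eq_mul, Complex.re_ofReal_mul]
  have hAle : (star e ⬝ᵥ A.mulVec e).re ≤ lmax * (star e ⬝ᵥ e).re := qf_le_lmax A hA lmax hub e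
  have hstep1 : (star e ⬝ᵥ A.mulVec e).re
      ≤ lmax / (lmax + t) * (star em ⬝ᵥ B.mulVec em).re := by
    have h1 : (star e ⬝ᵥ A.mulVec e).re ≤ lmax / (lmax + t) * (star e ⬝ᵥ B.mulVec e).re := by
      rw [hqB, div_mul_eq_mul_div, le_div_iff₀ hlt]
      nlinarith [mul_nonneg ht (sub_nonneg.mpr hAle),
        re_qf_nonneg hApd.posSemidef e, re_star_dot_nonneg e]
    refine h1.trans ?_
    exact mul_le_mul_of_nonneg_left hgal (div_pos hl0 hlt).le
  calc Real.sqrt ((star e ⬝ᵥ A.mulVec e).re)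
      ≤ Real.sqrt (lmax / (lmax + t) * (star em ⬝ᵥ B.mulVec em).re) :=
        Real.sqrt_le_sqrt hstep1
    _ = Real.sqrt (lmax / (lmax + t)) * Real.sqrt ((star em ⬝ᵥ B.mulVec em).re) :=
        Real.sqrt_mul (div_pos hl0 hlt).le _

/-- Error bound for the augmented FOM approximant of a Stieltjes matrix function:
the `A`-norm error of the augmented approximant is bounded by the integral of
`sqrt(λmax/(λmax+t))` times the `(A+tI)`-norm error of the standard (non-augmented)
FOM approximant. -/
theorem stmt_7 {N m k r : ℕ} (A : Matrix (Fin N) (Fin N) ℂ)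
    (hA : A.IsHermitian) (hApd : A.PosDef) (b : Fin N → ℂ)
    (lmax : ℝ) (hlmax : IsGreatest (Set.range hA.eigenvalues) lmax)
    (μ : Measure ℝ)
    (Vm : Matrix (Fin N) (Fin m) ℂ) (U : Matrix (Fin N) (Fin k) ℂ)
    (Vb : Matrix (Fin N) (Fin r) ℂ)
    -- `Vm` spans the Krylov space K_m(A, b):
    (hKrylov : Submodule.span ℂ (Set.range (fun j : Fin m => (fun i => Vm i j))) =
      Submodule.span ℂ (Set.range (fun j : Fin m => (A ^ (j : ℕ)).mulVec b)))
    -- `Vb` is an orthonormal basis of the augmented space span(Vm) + span(U):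
    (hVborth : Vbᴴ * Vb = 1)
    (hVbspan : Submodule.span ℂ (Set.range (fun j : Fin r => (fun i => Vb i j))) =
      Submodule.span ℂ (Set.range (fun j : Fin m => (fun i => Vm i j))) ⊔
        Submodule.span ℂ (Set.range (fun j : Fin k => (fun i => U i j))))
    -- standard (non-augmented) FOM approximants from the Krylov space:
    (xm : ℝ → (Fin N → ℂ))
    (hxm : ∀ t ∈ Set.Ici (0 : ℝ),
      xm t ∈ Submodule.span ℂ (Set.range (fun j : Fin m => (fun i => Vm i j))) ∧
      ∀ s ∈ Submodule.span ℂ (Set.range (fun j : Fin m => (fun i => Vm i j))),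
        star s ⬝ᵥ (b - (A + (t : ℂ) • (1 : Matrix (Fin N) (Fin N) ℂ)).mulVec (xm t)) = 0)
    -- integrability of the quantities involved:
    (hint1 : Integrable (fun t : ℝ =>
      ((A + (t : ℂ) • (1 : Matrix (Fin N) (Fin N) ℂ))⁻¹).mulVec b) (μ.restrict (Set.Ici 0)))
    (hint2 : Integrable (fun t : ℝ =>
      ((Vbᴴ * A * Vb + (t : ℂ) • (1 : Matrix (Fin r) (Fin r) ℂ))⁻¹).mulVec
        (Vbᴴ.mulVec b)) (μ.restrict (Set.Ici 0)))
    (hint3 : Integrable (fun t : ℝ =>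
      Real.sqrt (lmax / (lmax + t)) *
        Real.sqrt ((star (((A + (t : ℂ) • (1 : Matrix (Fin N) (Fin N) ℂ))⁻¹).mulVec b - xm t) ⬝ᵥ
          (A + (t : ℂ) • (1 : Matrix (Fin N) (Fin N) ℂ)).mulVec
            (((A + (t : ℂ) • (1 : Matrix (Fin N) (Fin N) ℂ))⁻¹).mulVec b - xm t)).re))
      (μ.restrict (Set.Ici 0))) :
    Real.sqrt ((star
        ((∫ t in Set.Ici (0 : ℝ),
            ((A + (t : ℂ) • (1 : Matrix (Fin N) (Fin N) ℂ))⁻¹).mulVec b ∂μ) -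
          Vb.mulVec (∫ t in Set.Ici (0 : ℝ),
            ((Vbᴴ * A * Vb + (t : ℂ) • (1 : Matrix (Fin r) (Fin r) ℂ))⁻¹).mulVec
              (Vbᴴ.mulVec b) ∂μ)) ⬝ᵥ
        A.mulVec
        ((∫ t in Set.Ici (0 : ℝ),
            ((A + (t : ℂ) • (1 : Matrix (Fin N) (Fin N) ℂ))⁻¹).mulVec b ∂μ) -
          Vb.mulVec (∫ t in Set.Ici (0 : ℝ),
            ((Vbᴴ * A * Vb + (t : ℂ) • (1 : Matrix (Fin r) (Fin r) ℂ))⁻¹).mulVec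
              (Vbᴴ.mulVec b) ∂μ))).re) ≤
      ∫ t in Set.Ici (0 : ℝ),
        Real.sqrt (lmax / (lmax + t)) *
          Real.sqrt ((star (((A + (t : ℂ) • (1 : Matrix (Fin N) (Fin N) ℂ))⁻¹).mulVec b - xm t) ⬝ᵥ
            (A + (t : ℂ) • (1 : Matrix (Fin N) (Fin N) ℂ)).mulVec
              (((A + (t : ℂ) • (1 : Matrix (Fin N) (Fin N) ℂ))⁻¹).mulVec b - xm t)).re) ∂μ := by
  classical
  -- positivity of lmax
  obtain ⟨i0, hi0⟩ := hlmax.1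
  have hl0 : 0 < lmax := hi0 ▸ hApd.eigenvalues_pos i0
  have hub : ∀ i, hA.eigenvalues i ≤ lmax := fun i => hlmax.2 ⟨i, rfl⟩
  set F : ℝ → (Fin N → ℂ) := fun t =>
    ((A + (t : ℂ) • (1 : Matrix (Fin N) (Fin N) ℂ))⁻¹).mulVec b with hF
  set G : ℝ → (Fin r → ℂ) := fun t =>
    ((Vbᴴ * A * Vb + (t : ℂ) • (1 : Matrix (Fin r) (Fin r) ℂ))⁻¹).mulVec (Vbᴴ.mulVec b) with hG
  set g : ℝ → (Fin N → ℂ) := fun t => F t - Vb.mulVec (G t) with hg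
  -- the mulVec continuous linear map
  let L : (Fin r → ℂ) →L[ℂ] (Fin N → ℂ) := LinearMap.toContinuousLinearMap Vb.mulVecLin
  have hgint' : Integrable (fun t => Vb.mulVec (G t)) (μ.restrict (Set.Ici 0)) :=
    L.integrable_comp hint2
  have hgint : Integrable g (μ.restrict (Set.Ici 0)) := hint1.sub hgint'
  have hw : (∫ t in Set.Ici (0 : ℝ), F t ∂μ) - Vb.mulVec (∫ t in Set.Ici (0 : ℝ), G t ∂μ)
      = ∫ t in Set.Ici (0 : ℝ), g t ∂μ := by
    have hL : Vb.mulVec (∫ t in Set.Ici (0 : ℝ), G t ∂μ)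
        = ∫ t in Set.Ici (0 : ℝ), Vb.mulVec (G t) ∂μ :=
      (L.integral_comp_comm hint2).symm
    rw [hL, ← integral_sub hint1 hgint']
  -- the sqrt matrix
  obtain ⟨S, hSH, hS⟩ : ∃ S : Matrix (Fin N) (Fin N) ℂ, S.IsHermitian ∧ S * S = A := by
    open scoped MatrixOrder in
    exact ⟨CFC.sqrt A, (CFC.sqrt_nonneg A).posSemidef.1, CFC.sqrt_mul_sqrt_self A hApd.posSemidef.nonneg⟩
  let T : (Fin N → ℂ) →L[ℂ] EuclideanSpace ℂ (Fin N) :=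
    LinearMap.toContinuousLinearMap
      ((WithLp.linearEquiv 2 ℂ (Fin N → ℂ)).symm.toLinearMap ∘ₗ S.mulVecLin)
  have hT : ∀ v : Fin N → ℂ, T v = (WithLp.equiv 2 (Fin N → ℂ)).symm (S.mulVec v) :=
    fun v => rfl
  have hnorm : ∀ v : Fin N → ℂ,
      Real.sqrt ((star v ⬝ᵥ A.mulVec v).re) = ‖T v‖ := by
    intro v
    rw [hT v]
    exact sqrt_qf_eq_norm hSH hS v
  have hTg : Integrable (fun t => T (g t)) (μ.restrict (Set.Ici 0)) := T.integrable_comp hgint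
  rw [hw, hnorm]
  have h1 : T (∫ t in Set.Ici (0 : ℝ), g t ∂μ) = ∫ t in Set.Ici (0 : ℝ), T (g t) ∂μ :=
    (T.integral_comp_comm hgint).symm
  rw [h1]
  refine le_trans (norm_integral_le_integral_norm _) ?_
  refine integral_mono_of_nonneg (Filter.Eventually.of_forall fun t => norm_nonneg _) hint3 ?_
  filter_upwards [ae_restrict_mem measurableSet_Ici] with t ht
  -- pointwise bound for t ≥ 0
  have hxmem : xm t ∈ Submodule.span ℂ (Set.range (fun j : Fin r => (fun i => Vb i j))) := by
    rw [hVbspan]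
    exact Submodule.mem_sup_left ((hxm t ht).1)
  have hxmem' : xm t ∈ LinearMap.range Vb.mulVecLin := by
    rw [Matrix.range_mulVecLin]
    exact hxmem
  obtain ⟨c, hc⟩ := hxmem'
  have hb := pointwise_bound A hA hApd lmax hl0 hub Vb hVborth b t ht (xm t) c hc.symm
  calc ‖T (g t)‖ = Real.sqrt ((star (g t) ⬝ᵥ A.mulVec (g t)).re) := (hnorm (g t)).symm
    _ ≤ _ := hb
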